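/- arXiv:2006.00496 — 2 statements merged into one kernel-verified Lean document; each statement's English description precedes it below -/
import Mathlib

section
/- For all N, k, n ≥ 0, the number of partitions of n into at most k parts, each part at most N, equals the coefficient of q^n in the Gaussian binomial coefficient [N+k choose N]_q. -/
open Polynomial

/-- Gaussian binomial coefficient `[n choose k]_q` as a polynomial in `ℤ[q]`,
defined by the Pascal-type recurrence; it is `0` when `k > n`. -/
noncomputable def gauss : ℕ → ℕ → Polynomial ℤ
  | _, 0 => 1
  | 0, _ + 1 => 0
  | n + 1, k + 1 => gauss n (k + 1) + Polynomial.X ^ (n - k) * gauss n k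

/-- `p(N,k,n)`: number of partitions of `n` into at most `k` parts, each part
positive and at most `N`. -/
noncomputable def pcount (N k n : ℕ) : ℕ :=
  Nat.card {s : Multiset ℕ //
    s.sum = n ∧ s.card ≤ k ∧ ∀ x ∈ s, 0 < x ∧ x ≤ N}

/-- `p̄_r(N₁,N₂,k₁,k₂,n)`: number of two-colored partitions of `n` with at most `k₁`
parts of the first kind, each positive, divisible by `r` and at most `N₁·r`, and at
most `k₂` parts of the second kind, each positive and at most `N₂`. -/
noncomputable def pbar (r N1 N2 k1 k2 n : ℕ) : ℕ :=
  Nat.card {p : Multiset ℕ × Multiset ℕ //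
    p.1.sum + p.2.sum = n ∧ p.1.card ≤ k1 ∧ p.2.card ≤ k2 ∧
    (∀ x ∈ p.1, 0 < x ∧ r ∣ x ∧ x ≤ N1 * r) ∧ (∀ x ∈ p.2, 0 < x ∧ x ≤ N2)}

/-- `p̄_r` with integer arguments: zero if any argument is negative. -/
noncomputable def pbarZ (r : ℕ) (N1 N2 k1 k2 n : ℤ) : ℕ :=
  if 0 ≤ N1 ∧ 0 ≤ N2 ∧ 0 ≤ k1 ∧ 0 ≤ k2 ∧ 0 ≤ n then
    pbar r N1.toNat N2.toNat k1.toNat k2.toNat n.toNat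
  else 0

/-- `Q̄_r(N₁,N₂,k₁,k₂,n)`: number of two-colored partitions of `n` with exactly `k₁`
distinct parts of the first kind, each positive, divisible by `r` and at most `N₁·r`,
and exactly `k₂` distinct parts of the second kind, each positive and at most `N₂`. -/
noncomputable def Qbar (r N1 N2 k1 k2 n : ℕ) : ℕ :=
  Nat.card {p : Multiset ℕ × Multiset ℕ //
    p.1.sum + p.2.sum = n ∧ p.1.Nodup ∧ p.2.Nodup ∧ p.1.card = k1 ∧ p.2.card = k2 ∧
    (∀ x ∈ p.1, 0 < x ∧ r ∣ x ∧ x ≤ N1 * r) ∧ (∀ x ∈ p.2, 0 < x ∧ x ≤ N2)}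

lemma gauss_succ_succ (n k : ℕ) :
    gauss (n+1) (k+1) = gauss n (k + 1) + Polynomial.X ^ (n - k) * gauss n k := rfl

lemma gauss_zero_right (n : ℕ) : gauss n 0 = 1 := by cases n <;> rfl

lemma gauss_eq_zero : ∀ n k : ℕ, n < k → gauss n k = 0
  | 0, _+1, _ => rfl
  | n+1, k+1, h => by
    rw [gauss_succ_succ, gauss_eq_zero n (k+1) (by omega), gauss_eq_zero n k (by omega)]
    ring

lemma gauss_diag : ∀ n : ℕ, gauss n n = 1
  | 0 => rfl
  | n+1 => by
    rw [gauss_succ_succ, gauss_eq_zero n (n+1) (by omega), gauss_diag n]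
    simp

lemma gauss_pascal : ∀ n k : ℕ, gauss (n+1) (k+1) = gauss n k + X^(k+1) * gauss n (k+1)
  | 0, k => by
    cases k with
    | zero =>
      rw [gauss_succ_succ]
      norm_num [show gauss 0 1 = 0 from rfl, show gauss 0 0 = 1 from rfl]
    | succ k =>
      rw [gauss_succ_succ, gauss_eq_zero 0 (k+2) (by omega),
        gauss_eq_zero 0 (k+1) (by omega)]
      ring
  | n+1, 0 => by
    have d0 := gauss_succ_succ (n+1) 0
    have d1 := gauss_succ_succ n 0
    have h := gauss_pascal n 0
    simp only [Nat.sub_zero, gauss_zero_right] at d0 d1 h ⊢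
    linear_combination d0 + h - X * d1
  | n+1, k+1 => by
    rcases lt_trichotomy n k with h | h | h
    · rw [gauss_eq_zero (n+2) (k+2) (by omega), gauss_eq_zero (n+1) (k+1) (by omega),
        gauss_eq_zero (n+1) (k+2) (by omega)]; ring
    · subst h
      rw [gauss_diag, gauss_eq_zero (n+1) (n+2) (by omega), gauss_succ_succ,
        gauss_eq_zero n (n+1) (by omega), gauss_diag]
      simp
    · obtain ⟨m, rfl⟩ : ∃ m, n = k + 1 + m := ⟨n - (k+1), by omega⟩
      have d0 := gauss_succ_succ (k+1+m+1) (k+1)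
      rw [show k+1+m+1 - (k+1) = m+1 from by omega] at d0
      have d1 := gauss_succ_succ (k+1+m) (k+1)
      rw [show k+1+m - (k+1) = m from by omega] at d1
      have d2 := gauss_succ_succ (k+1+m) k
      rw [show k+1+m - k = m+1 from by omega] at d2
      have h1 := gauss_pascal (k+1+m) (k+1)
      have h2 := gauss_pascal (k+1+m) k
      linear_combination d0 + h1 - X^(k+2) * d1 - d2 + X^(m+1) * h2

instance pcount_finite (N k n : ℕ) :
    Finite {s : Multiset ℕ // s.sum = n ∧ s.card ≤ k ∧ ∀ x ∈ s, 0 < x ∧ x ≤ N} := by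
  apply Finite.of_injective
    (fun s => (⟨s.1, fun h => (s.2.2.2 _ h).1, s.2.1⟩ : Nat.Partition n))
  intro a b hab
  exact Subtype.ext (congrArg Nat.Partition.parts hab)

lemma pcount_k_zero (N n : ℕ) : pcount N 0 n = if n = 0 then 1 else 0 := by
  unfold pcount
  have hz : ∀ s : Multiset ℕ, s.card ≤ 0 → s = 0 := by
    intro s hs
    simpa using Multiset.card_eq_zero.mp (Nat.le_zero.mp hs)
  split_ifs with h
  · subst h
    rw [Nat.card_eq_one_iff_unique]
    constructor
    · constructor
      intro a b
      exact Subtype.ext ((hz a.1 a.2.2.1).trans (hz b.1 b.2.2.1).symm)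
    · exact ⟨⟨0, by simp⟩⟩
  · rw [Nat.card_eq_zero]
    left
    constructor
    rintro ⟨s, hsum, hcard, -⟩
    exact h (by rw [← hsum, hz s hcard]; rfl)

lemma pcount_N_zero (k n : ℕ) : pcount 0 k n = if n = 0 then 1 else 0 := by
  unfold pcount
  have hz : ∀ s : Multiset ℕ, (∀ x ∈ s, 0 < x ∧ x ≤ 0) → s = 0 := by
    intro s hs
    apply Multiset.eq_zero_of_forall_notMem
    intro x hx
    have := hs x hx
    omega
  split_ifs with h
  · subst h
    rw [Nat.card_eq_one_iff_unique]
    constructor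
    · constructor
      intro a b
      exact Subtype.ext ((hz a.1 a.2.2.2).trans (hz b.1 b.2.2.2).symm)
    · exact ⟨⟨0, by simp⟩⟩
  · rw [Nat.card_eq_zero]
    left
    constructor
    rintro ⟨s, hsum, -, hb⟩
    exact h (by rw [← hsum, hz s hb]; rfl)

/-- Splitting partitions with parts ≤ N+1 according to whether N+1 occurs. -/
noncomputable def partSplit (N k n : ℕ) (hn : N + 1 ≤ n) :
    {s : Multiset ℕ // s.sum = n ∧ s.card ≤ k+1 ∧ ∀ x ∈ s, 0 < x ∧ x ≤ N+1} ≃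
    ({s : Multiset ℕ // s.sum = n ∧ s.card ≤ k+1 ∧ ∀ x ∈ s, 0 < x ∧ x ≤ N} ⊕
     {s : Multiset ℕ // s.sum = n - (N+1) ∧ s.card ≤ k ∧ ∀ x ∈ s, 0 < x ∧ x ≤ N+1}) where
  toFun s :=
    if hm : (N+1) ∈ s.1 then
      Sum.inr ⟨s.1.erase (N+1), by
        obtain ⟨hsum, hcard, hb⟩ := s.2
        have hce := Multiset.cons_erase hm
        have hse : s.1.sum = (N+1) + (s.1.erase (N+1)).sum := by
          conv_lhs => rw [← hce]
          rw [Multiset.sum_cons]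
        refine ⟨by omega, ?_, fun x hx => hb x (Multiset.mem_of_mem_erase hx)⟩
        have hcc : Multiset.card (s.1.erase (N+1)) = Multiset.card s.1 - 1 := by
          rw [Multiset.card_erase_of_mem hm, Nat.pred_eq_sub_one]
        have hc1 : 1 ≤ Multiset.card s.1 := by
          rw [Nat.one_le_iff_ne_zero]
          intro h0
          rw [Multiset.card_eq_zero.mp h0] at hm
          simp at hm
        omega⟩
    else
      Sum.inl ⟨s.1, by
        obtain ⟨hsum, hcard, hb⟩ := s.2
        refine ⟨hsum, hcard, fun x hx => ?_⟩
        have h1 := hb x hx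
        have h2 : x ≠ N+1 := fun h => hm (h ▸ hx)
        omega⟩
  invFun t :=
    match t with
    | Sum.inl t => ⟨t.1, t.2.1, t.2.2.1, fun x hx => ⟨(t.2.2.2 x hx).1, by
        have := (t.2.2.2 x hx).2; omega⟩⟩
    | Sum.inr t => ⟨(N+1) ::ₘ t.1, by
        obtain ⟨hsum, hcard, hb⟩ := t.2
        refine ⟨by rw [Multiset.sum_cons, hsum]; omega, by simp; omega, fun x hx => ?_⟩
        rcases Multiset.mem_cons.mp hx with h | h
        · omega
        · exact hb x h⟩
  left_inv s := by
    by_cases hm : (N+1) ∈ s.1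
    · simp only [dif_pos hm]
      exact Subtype.ext (Multiset.cons_erase hm)
    · simp only [dif_neg hm]
  right_inv t := by
    match t with
    | Sum.inl t =>
      have hm : (N+1) ∉ t.1 := fun hm => by have := (t.2.2.2 _ hm).2; omega
      simp only [dif_neg hm]
    | Sum.inr t =>
      have hm : (N+1) ∈ (N+1) ::ₘ t.1 := Multiset.mem_cons_self _ _
      simp only [dif_pos hm]
      congr 1
      exact Subtype.ext (Multiset.erase_cons_head _ _)

lemma pcount_rec (N k n : ℕ) (hn : N + 1 ≤ n) :
    pcount (N+1) (k+1) n = pcount N (k+1) n + pcount (N+1) k (n - (N+1)) := by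
  unfold pcount
  rw [Nat.card_congr (partSplit N k n hn), Nat.card_sum]

lemma pcount_rec' (N k n : ℕ) (hn : n < N + 1) :
    pcount (N+1) (k+1) n = pcount N (k+1) n := by
  unfold pcount
  apply Nat.card_congr
  apply Equiv.subtypeEquivRight
  intro s
  constructor
  · rintro ⟨hsum, hcard, hb⟩
    refine ⟨hsum, hcard, fun x hx => ?_⟩
    have h1 := hb x hx
    have h2 : x ≤ s.sum := Multiset.single_le_sum (fun y hy => Nat.zero_le y) x hx
    omega
  · rintro ⟨hsum, hcard, hb⟩
    refine ⟨hsum, hcard, fun x hx => ?_⟩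
    have := hb x hx
    omega

/-- The generating function of `p(N,k,n)` is the Gaussian binomial `[N+k choose N]_q`. -/
theorem stmt0 (N k n : ℕ) :
    (gauss (N + k) N).coeff n = (pcount N k n : ℤ) := by
  induction N generalizing k n with
  | zero =>
    rw [Nat.zero_add, gauss_zero_right, pcount_N_zero, Polynomial.coeff_one]
    split_ifs <;> simp
  | succ N ihN =>
    induction k generalizing n with
    | zero =>
      rw [Nat.add_zero, gauss_diag, pcount_k_zero, Polynomial.coeff_one]
      split_ifs <;> simp
    | succ k ihk =>
      have hg := gauss_pascal (N+k+1) N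
      have e1 : N+1+(k+1) = N+k+1+1 := by omega
      have e2 : N+(k+1) = N+k+1 := by omega
      have e3 : N+1+k = N+k+1 := by omega
      rw [e1, hg, Polynomial.coeff_add,
        mul_comm (X^(N+1)) (gauss (N+k+1) (N+1)), Polynomial.coeff_mul_X_pow']
      by_cases hn : N+1 ≤ n
      · rw [if_pos hn, pcount_rec N k n hn, ← e2, ihN (k+1) n, show N+(k+1) = N+1+k from by omega, ihk (n - (N+1))]
        push_cast
        ring
      · rw [if_neg hn, pcount_rec' N k n (by omega), ← e2, ihN (k+1) n]
        ring
end

section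
/- For N, k, n ≥ 0, p(N,k,n) = Σ_{j=0}^{⌊k/2⌋} p̄_2(N, N+1−k+2j, j, k−2j, n − C(k−2j,2)), where terms with any negative argument are zero. -/
open Polynomial

namespace Stmt14Aux


/-- subtract an increasing staircase starting at `c` -/
def dec : ℕ → List ℕ → List ℕ
  | _, [] => []
  | c, a :: t => (a - c) :: dec (c+1) t

/-- add an increasing staircase starting at `c` -/
def inc : ℕ → List ℕ → List ℕ
  | _, [] => []
  | c, a :: t => (a + c) :: inc (c+1) t

@[simp] lemma dec_nil (c : ℕ) : dec c [] = [] := rfl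
@[simp] lemma dec_cons (c a : ℕ) (t : List ℕ) : dec c (a :: t) = (a - c) :: dec (c+1) t := rfl
@[simp] lemma inc_nil (c : ℕ) : inc c [] = [] := rfl
@[simp] lemma inc_cons (c a : ℕ) (t : List ℕ) : inc c (a :: t) = (a + c) :: inc (c+1) t := rfl

@[simp] lemma dec_length (c : ℕ) (l : List ℕ) : (dec c l).length = l.length := by
  induction l generalizing c with
  | nil => rfl
  | cons a t ih => simp [ih]

@[simp] lemma inc_length (c : ℕ) (l : List ℕ) : (inc c l).length = l.length := by
  induction l generalizing c with
  | nil => rfl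
  | cons a t ih => simp [ih]

lemma inc_dec (c : ℕ) (l : List ℕ) (hs : l.Pairwise (· < ·)) (h : ∀ x ∈ l, c ≤ x) :
    inc c (dec c l) = l := by
  induction l generalizing c with
  | nil => rfl
  | cons a t ih =>
    have hc : c ≤ a := h a (by simp)
    rw [List.pairwise_cons] at hs
    simp only [dec_cons, inc_cons]
    rw [ih (c+1) hs.2 (fun x hx => by have := hs.1 x hx; omega)]
    congr 1; omega

lemma dec_inc (c : ℕ) (l : List ℕ) : dec c (inc c l) = l := by
  induction l generalizing c with
  | nil => rfl
  | cons a t ih => simp [ih]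

lemma dec_sum (c : ℕ) (l : List ℕ) (hs : l.Pairwise (· < ·)) (h : ∀ x ∈ l, c ≤ x) :
    (dec c l).sum + l.length * c + l.length.choose 2 = l.sum := by
  induction l generalizing c with
  | nil => simp
  | cons a t ih =>
    have hc : c ≤ a := h a (by simp)
    rw [List.pairwise_cons] at hs
    have := ih (c+1) hs.2 (fun x hx => by have := hs.1 x hx; omega)
    have hch : (t.length + 1).choose 2 = t.length.choose 2 + t.length := by
      rw [Nat.choose_succ_succ]; simp [Nat.choose_one_right]; omega
    have hm1 : (t.length+1)*c = t.length*c + c := by ring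
    have hm2 : t.length*(c+1) = t.length*c + t.length := by ring
    simp only [dec_cons, List.sum_cons, List.length_cons]
    omega

lemma inc_sum (c : ℕ) (l : List ℕ) :
    (inc c l).sum = l.sum + l.length * c + l.length.choose 2 := by
  induction l generalizing c with
  | nil => simp
  | cons a t ih =>
    have hch : (t.length + 1).choose 2 = t.length.choose 2 + t.length := by
      rw [Nat.choose_succ_succ]; simp [Nat.choose_one_right]; omega
    have hm1 : (t.length+1)*c = t.length*c + c := by ring
    have hm2 : t.length*(c+1) = t.length*c + t.length := by ring
    simp only [inc_cons, List.sum_cons, List.length_cons, ih (c+1)]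
    omega

/-- lower bound on elements of `dec` -/
lemma dec_mem_lb (c e : ℕ) (l : List ℕ) (hs : l.Pairwise (· < ·)) (h : ∀ x ∈ l, e + c ≤ x) :
    ∀ y ∈ dec c l, e ≤ y := by
  induction l generalizing c with
  | nil => simp
  | cons a t ih =>
    rw [List.pairwise_cons] at hs
    intro y hy
    rcases List.mem_cons.1 hy with rfl | hy
    · have := h a (by simp); omega
    · exact ih (c+1) hs.2 (fun x hx => by have := hs.1 x hx; have := h a (by simp); omega) y hy

lemma dec_sorted (c : ℕ) (l : List ℕ) (hs : l.Pairwise (· < ·)) (h : ∀ x ∈ l, c ≤ x) :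
    (dec c l).Pairwise (· ≤ ·) := by
  induction l generalizing c with
  | nil => simp
  | cons a t ih =>
    have hc : c ≤ a := h a (by simp)
    rw [List.pairwise_cons] at hs
    rw [dec_cons, List.pairwise_cons]
    refine ⟨?_, ih (c+1) hs.2 (fun x hx => by have := hs.1 x hx; omega)⟩
    exact dec_mem_lb (c+1) (a - c) t hs.2 (fun x hx => by have := hs.1 x hx; omega)

/-- upper bound on elements of `dec` (the key "gap" bound) -/
lemma dec_mem_ub (c B : ℕ) (l : List ℕ) (hs : l.Pairwise (· < ·)) (hlb : ∀ x ∈ l, c ≤ x)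
    (hub : ∀ x ∈ l, x ≤ B) : ∀ y ∈ dec c l, y + c + l.length ≤ B + 1 := by
  induction l generalizing c with
  | nil => simp
  | cons a t ih =>
    have hc : c ≤ a := hlb a (by simp)
    rw [List.pairwise_cons] at hs
    intro y hy
    have htail : ∀ x ∈ t, c + 1 ≤ x := fun x hx => by have := hs.1 x hx; omega
    rcases List.mem_cons.1 hy with rfl | hy
    · -- a - c + c + (t.length + 1) ≤ B + 1, need a + t.length ≤ B
      -- via: last element ≥ a + t.length
      have key : ∀ t : List ℕ, t.Pairwise (· < ·) → (∀ x ∈ t, x ≤ B) → ∀ a, (∀ x ∈ t, a < x) →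
          a + t.length ≤ B ∨ t = [] := by
        intro t
        induction t with
        | nil => intro _ _ _ _; right; rfl
        | cons b u ihu =>
          intro hsort hb a ha
          rw [List.pairwise_cons] at hsort
          left
          rcases ihu hsort.2 (fun x hx => hb x (by simp [hx])) b hsort.1 with h1 | rfl
          · have := ha b (by simp); simpa using by omega
          · have := ha b (by simp); have := hb b (by simp); simpa using by omega
      rcases key t hs.2 (fun x hx => hub x (by simp [hx])) a hs.1 with h1 | rfl
      · simp only [List.length_cons]; omega
      · have := hub a (by simp); simp; omega
    · have := ih (c+1) hs.2 htail (fun x hx => hub x (by simp [hx])) y hy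
      simp only [List.length_cons]; omega

/-- lower bound on elements of `inc` -/
lemma inc_mem_lb (c e : ℕ) (l : List ℕ) (h : ∀ x ∈ l, e ≤ x) :
    ∀ y ∈ inc c l, e + c ≤ y := by
  induction l generalizing c with
  | nil => simp
  | cons a t ih =>
    intro y hy
    rcases List.mem_cons.1 hy with rfl | hy
    · have := h a (by simp); omega
    · have := ih (c+1) (fun x hx => h x (by simp [hx])) y hy; omega

/-- upper bound on elements of `inc` -/
lemma inc_mem_ub (c B : ℕ) (l : List ℕ) (h : ∀ x ∈ l, x ≤ B) :
    ∀ y ∈ inc c l, y + 1 ≤ B + c + l.length := by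
  induction l generalizing c with
  | nil => simp
  | cons a t ih =>
    intro y hy
    rcases List.mem_cons.1 hy with rfl | hy
    · have := h a (by simp); simp; omega
    · have := ih (c+1) (fun x hx => h x (by simp [hx])) y hy; simp only [List.length_cons]; omega

lemma inc_sorted (c : ℕ) (l : List ℕ) (hs : l.Pairwise (· ≤ ·)) :
    (inc c l).Pairwise (· < ·) := by
  induction l generalizing c with
  | nil => simp
  | cons a t ih =>
    rw [List.pairwise_cons] at hs
    rw [inc_cons, List.pairwise_cons]
    refine ⟨fun y hy => ?_, ih (c+1) hs.2⟩
    have := inc_mem_lb (c+1) a t hs.1 y hy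
    omega




/-- half of the "paired" part: for each value, `count/2` copies -/
def half (s : Multiset ℕ) : Multiset ℕ :=
  ∑ a ∈ s.toFinset, Multiset.replicate (s.count a / 2) a

/-- values with odd multiplicity, each once -/
def odds (s : Multiset ℕ) : Multiset ℕ :=
  s.dedup.filter (fun v => ¬ 2 ∣ s.count v)

lemma count_half (s : Multiset ℕ) (v : ℕ) : (half s).count v = s.count v / 2 := by
  rw [half, Multiset.count_sum']
  simp only [Multiset.count_replicate]
  rw [Finset.sum_ite_eq' s.toFinset v (fun a => s.count a / 2)]
  by_cases h : v ∈ s.toFinset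
  · simp [h]
  · simp only [h, if_false]
    rw [Multiset.mem_toFinset] at h
    simp [Multiset.count_eq_zero_of_notMem h]

lemma count_odds (s : Multiset ℕ) (v : ℕ) : (odds s).count v = s.count v % 2 := by
  rw [odds, Multiset.count_filter]
  by_cases h : v ∈ s
  · simp only [Multiset.count_dedup, h, if_true]
    by_cases h2 : 2 ∣ s.count v
    · simp [h2]; omega
    · simp [h2]; omega
  · simp [Multiset.count_eq_zero_of_notMem h, Multiset.count_dedup, h]

lemma odds_nodup (s : Multiset ℕ) : (odds s).Nodup := (Multiset.nodup_dedup s).filter _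

lemma half_add_odds (s : Multiset ℕ) : half s + half s + odds s = s := by
  ext v
  simp only [Multiset.count_add, count_half, count_odds]
  omega

lemma half_tt (t u : Multiset ℕ) (hu : u.Nodup) : half (t + t + u) = t := by
  rw [Multiset.nodup_iff_count_le_one] at hu
  ext v
  simp only [count_half, Multiset.count_add]
  have := hu v
  omega

lemma odds_tt (t u : Multiset ℕ) (hu : u.Nodup) : odds (t + t + u) = u := by
  rw [Multiset.nodup_iff_count_le_one] at hu
  ext v
  simp only [count_odds, Multiset.count_add]
  have := hu v
  omega

lemma mem_half (s : Multiset ℕ) (v : ℕ) (h : v ∈ half s) : v ∈ s := by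
  rw [← Multiset.count_pos] at h ⊢
  rw [count_half] at h
  omega

lemma mem_odds (s : Multiset ℕ) (v : ℕ) (h : v ∈ odds s) : v ∈ s := by
  rw [← Multiset.count_pos] at h ⊢
  rw [count_odds] at h
  omega

lemma card_half_odds (s : Multiset ℕ) :
    2 * Multiset.card (half s) + Multiset.card (odds s) = Multiset.card s := by
  conv_rhs => rw [← half_add_odds s]
  simp only [Multiset.card_add]
  ring

lemma sum_half_odds (s : Multiset ℕ) : 2 * (half s).sum + (odds s).sum = s.sum := by
  conv_rhs => rw [← half_add_odds s]
  simp only [Multiset.sum_add]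
  ring


/-- If a sorted list coerces to `s`, it is the sort of `s`. -/
lemma sort_coe (l : List ℕ) (h : l.Pairwise (· ≤ ·)) :
    Multiset.sort (↑l : Multiset ℕ) (· ≤ ·) = l := by
  apply fun hp => List.Perm.eq_of_pairwise' (Multiset.pairwise_sort _ _) h hp
  rw [← Multiset.coe_eq_coe, Multiset.sort_eq]

lemma sum_filter_pos (s : Multiset ℕ) : (Multiset.filter (0 < ·) s).sum = s.sum := by
  conv_rhs => rw [← Multiset.filter_add_not (0 < ·) s, Multiset.sum_add]
  have : (Multiset.filter (fun a => ¬ 0 < a) s).sum = 0 :=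
    Multiset.sum_eq_zero (fun x hx => by have := (Multiset.mem_filter.1 hx).2; omega)
  omega

lemma filter_not_pos (s : Multiset ℕ) :
    Multiset.filter (fun a => ¬ 0 < a) s = Multiset.replicate (s.count 0) 0 := by
  have h : Multiset.filter (fun a => ¬ 0 < a) s = Multiset.filter (fun a => a = 0) s :=
    Multiset.filter_congr (fun x _ => by omega)
  rw [h]
  exact Multiset.filter_eq' s 0

/-- staircase-subtract map on a multiset of distinct values -/
def stairG (O : Multiset ℕ) : Multiset ℕ :=
  Multiset.filter (0 < ·) ↑(dec 0 (O.sort (· ≤ ·)))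

/-- inverse: pad with zeros to `m` parts and staircase-add -/
def stairG' (m : ℕ) (p : Multiset ℕ) : Multiset ℕ :=
  ↑(inc 0 (List.replicate (m - Multiset.card p) 0 ++ p.sort (· ≤ ·)))

section
variable {O : Multiset ℕ} (hO : O.Nodup)

private lemma sort_slt (hO : O.Nodup) : (O.sort (· ≤ ·)).Pairwise (· < ·) := by
  refine ((Multiset.pairwise_sort _ _).and (?_ : (O.sort (· ≤ ·)).Nodup)).imp (fun h => lt_of_le_of_ne h.1 h.2)
  rw [← Multiset.coe_nodup (l := O.sort (· ≤ ·)), Multiset.sort_eq]; exact hO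

lemma stairG_card_le : Multiset.card (stairG O) ≤ Multiset.card O := by
  calc Multiset.card (stairG O) ≤ Multiset.card (↑(dec 0 (O.sort (· ≤ ·))) : Multiset ℕ) :=
        Multiset.card_le_card (Multiset.filter_le _ _)
    _ = Multiset.card O := by simp [dec_length, Multiset.length_sort]

lemma stairG_sum (hO : O.Nodup) : (stairG O).sum + (Multiset.card O).choose 2 = O.sum := by
  have h := dec_sum 0 (O.sort (· ≤ ·)) (sort_slt hO) (fun x _ => Nat.zero_le x)
  have h2 : (O.sort (· ≤ ·)).sum = O.sum := by
    rw [← Multiset.sum_coe, Multiset.sort_eq]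
  rw [stairG, sum_filter_pos]
  rw [Multiset.sum_coe]
  simp only [Multiset.length_sort] at h
  omega

lemma stairG_mem (hO : O.Nodup) {B : ℕ} (hB : ∀ x ∈ O, x ≤ B) :
    ∀ y ∈ stairG O, 0 < y ∧ y + Multiset.card O ≤ B + 1 := by
  intro y hy
  rw [stairG, Multiset.mem_filter, Multiset.mem_coe] at hy
  refine ⟨hy.2, ?_⟩
  have := dec_mem_ub 0 B (O.sort (· ≤ ·)) (sort_slt hO) (fun x _ => Nat.zero_le x)
    (fun x hx => hB x (by rwa [← Multiset.mem_coe, Multiset.sort_eq] at hx)) y hy.1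
  simpa [Multiset.length_sort] using this

lemma stairG'_stairG (hO : O.Nodup) : stairG' (Multiset.card O) (stairG O) = O := by
  set l := O.sort (· ≤ ·) with hl
  have hslt : l.Pairwise (· < ·) := sort_slt hO
  set b := dec 0 l with hb
  have hbs : b.Pairwise (· ≤ ·) := dec_sorted 0 l hslt (fun x _ => Nat.zero_le x)
  have hsplit : (↑b : Multiset ℕ)
      = stairG O + Multiset.replicate (Multiset.count 0 (↑b : Multiset ℕ)) 0 := by
    conv_lhs => rw [← Multiset.filter_add_not (0 < ·) (↑b : Multiset ℕ)]
    rw [filter_not_pos, stairG, ← hl, ← hb]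
  have hcard : Multiset.card O = b.length := by
    rw [hb, dec_length, hl, Multiset.length_sort]
  have hz : Multiset.card O - Multiset.card (stairG O)
      = Multiset.count 0 (↑b : Multiset ℕ) := by
    have := congrArg (fun s => Multiset.card s) hsplit
    simp only [Multiset.card_add, Multiset.card_replicate, Multiset.coe_card] at this
    omega
  -- the padded sorted list equals b
  have hpad : List.replicate (Multiset.card O - Multiset.card (stairG O)) 0
      ++ (stairG O).sort (· ≤ ·) = b := by
    apply fun hp hs => List.Perm.eq_of_pairwise' hs hbs hp
    · rw [← Multiset.coe_eq_coe]
      rw [← Multiset.coe_add, Multiset.coe_replicate, Multiset.sort_eq, hz, add_comm]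
      exact hsplit.symm
    · rw [List.pairwise_append]
      refine ⟨List.pairwise_replicate.2 (Or.inr le_rfl), Multiset.pairwise_sort _ _, ?_⟩
      intro a ha b hb
      rw [List.eq_of_mem_replicate ha]
      exact Nat.zero_le _
  rw [stairG', hpad, hb, inc_dec 0 l hslt (fun x _ => Nat.zero_le x), hl, Multiset.sort_eq]

end

section
variable {m : ℕ} {p : Multiset ℕ}

/-- the padded list used by `stairG'` -/
private def padded (m : ℕ) (p : Multiset ℕ) : List ℕ :=
  List.replicate (m - Multiset.card p) 0 ++ p.sort (· ≤ ·)

private lemma padded_sorted : (padded m p).Pairwise (· ≤ ·) := by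
  rw [padded, List.pairwise_append]
  refine ⟨List.pairwise_replicate.2 (Or.inr le_rfl), Multiset.pairwise_sort _ _, ?_⟩
  intro a ha b hb
  rw [List.eq_of_mem_replicate ha]
  exact Nat.zero_le _

private lemma padded_length (hc : Multiset.card p ≤ m) : (padded m p).length = m := by
  simp [padded, Multiset.length_sort]
  omega

private lemma padded_sum : (padded m p).sum = p.sum := by
  rw [padded, List.sum_append, List.sum_replicate, ← Multiset.sum_coe, Multiset.sort_eq]
  simp

lemma stairG'_eq_inc : stairG' m p = ↑(inc 0 (padded m p)) := rfl

lemma stairG'_nodup : (stairG' m p).Nodup := by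
  rw [stairG'_eq_inc, Multiset.coe_nodup]
  exact (inc_sorted 0 _ padded_sorted).nodup

lemma stairG'_card (hc : Multiset.card p ≤ m) : Multiset.card (stairG' m p) = m := by
  rw [stairG'_eq_inc]
  simp [inc_length, padded_length hc]

lemma stairG'_sum (hc : Multiset.card p ≤ m) :
    (stairG' m p).sum = p.sum + m.choose 2 := by
  rw [stairG'_eq_inc, Multiset.sum_coe, inc_sum, padded_sum, padded_length hc]
  simp

lemma stairG'_mem (hc : Multiset.card p ≤ m) {B : ℕ} (hm : m ≤ B + 1)
    (hp : ∀ x ∈ p, x + m ≤ B + 1) : ∀ y ∈ stairG' m p, y ≤ B := by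
  intro y hy
  rw [stairG'_eq_inc, Multiset.mem_coe] at hy
  have hub : ∀ x ∈ padded m p, x ≤ B + 1 - m := by
    intro x hx
    rw [padded, List.mem_append] at hx
    rcases hx with hx | hx
    · rw [List.eq_of_mem_replicate hx]; exact Nat.zero_le _
    · have := hp x (by rwa [← Multiset.mem_coe, Multiset.sort_eq] at hx)
      omega
  have := inc_mem_ub 0 (B + 1 - m) (padded m p) hub y hy
  rw [padded_length hc] at this
  omega

lemma stairG_stairG' (hc : Multiset.card p ≤ m) (hp : ∀ x ∈ p, 0 < x) :
    stairG (stairG' m p) = p := by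
  have hsort : Multiset.sort (stairG' m p) (· ≤ ·) = inc 0 (padded m p) := by
    rw [stairG'_eq_inc]
    exact sort_coe _ ((inc_sorted 0 _ padded_sorted).imp le_of_lt)
  rw [stairG, hsort, dec_inc, padded, ← Multiset.coe_add, Multiset.coe_replicate,
    Multiset.filter_add, Multiset.sort_eq]
  have h1 : Multiset.filter (0 < ·) (Multiset.replicate (m - Multiset.card p) 0) = 0 :=
    Multiset.filter_eq_nil.2 (fun a ha => by
      rw [Multiset.eq_of_mem_replicate ha]; omega)
  have h2 : Multiset.filter (0 < ·) p = p := Multiset.filter_eq_self.2 hp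
  rw [h1, h2, zero_add]

end

end Stmt14Aux
namespace Stmt14Aux
open Multiset

/-! ### doubling maps -/

/-- double the positive parts -/
def dbl (t : Multiset ℕ) : Multiset ℕ := (Multiset.filter (0 < ·) t).map (2 * ·)

/-- halve and pad with zeros to `j` parts -/
def dbl' (j : ℕ) (u : Multiset ℕ) : Multiset ℕ :=
  u.map (· / 2) + Multiset.replicate (j - Multiset.card u) 0

lemma dbl_card_le (t : Multiset ℕ) : Multiset.card (dbl t) ≤ Multiset.card t := by
  rw [dbl, Multiset.card_map]
  exact Multiset.card_le_card (Multiset.filter_le _ _)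

lemma dbl_sum (t : Multiset ℕ) : (dbl t).sum = 2 * t.sum := by
  rw [dbl, ← sum_filter_pos t]
  generalize (Multiset.filter (0 < ·) t) = s
  induction s using Multiset.induction_on with
  | empty => simp
  | cons a s ih => simp [Multiset.map_cons, ih]; ring

lemma dbl_mem {t : Multiset ℕ} {x : ℕ} (hx : x ∈ dbl t) :
    ∃ y ∈ t, 0 < y ∧ x = 2 * y := by
  rw [dbl, Multiset.mem_map] at hx
  obtain ⟨y, hy, rfl⟩ := hx
  rw [Multiset.mem_filter] at hy
  exact ⟨y, hy.1, hy.2, rfl⟩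

lemma dbl'_dbl (t : Multiset ℕ) : dbl' (Multiset.card t) (dbl t) = t := by
  rw [dbl', dbl, Multiset.map_map]
  have h1 : Multiset.map ((· / 2) ∘ (2 * ·)) (Multiset.filter (0 < ·) t)
      = Multiset.filter (0 < ·) t := by
    rw [show ((· / 2) ∘ (2 * ·)) = fun x : ℕ => 2 * x / 2 from rfl]
    rw [Multiset.map_congr rfl (fun x _ => by omega : ∀ x ∈ Multiset.filter (0 < ·) t,
      2 * x / 2 = x)]
    exact Multiset.map_id' _
  rw [h1, Multiset.card_map]
  have h2 : Multiset.card t - Multiset.card (Multiset.filter (0 < ·) t)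
      = Multiset.count 0 t := by
    have := congrArg (fun s => Multiset.card s) (Multiset.filter_add_not (0 < ·) t)
    simp only [Multiset.card_add] at this
    rw [filter_not_pos t] at this
    simp only [Multiset.card_replicate] at this
    omega
  rw [h2, show Multiset.replicate (Multiset.count 0 t) 0
    = Multiset.filter (fun a => ¬ 0 < a) t from (filter_not_pos t).symm,
    Multiset.filter_add_not]

lemma dbl_dbl' {j : ℕ} {u : Multiset ℕ} (hc : Multiset.card u ≤ j)
    (hu : ∀ x ∈ u, 0 < x ∧ 2 ∣ x) : dbl (dbl' j u) = u := by
  rw [dbl', dbl, Multiset.filter_add]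
  have h1 : Multiset.filter (0 < ·) (Multiset.replicate (j - Multiset.card u) 0) = 0 :=
    Multiset.filter_eq_nil.2 (fun a ha => by rw [Multiset.eq_of_mem_replicate ha]; omega)
  have h2 : Multiset.filter (0 < ·) (Multiset.map (· / 2) u) = Multiset.map (· / 2) u :=
    Multiset.filter_eq_self.2 (fun a ha => by
      rw [Multiset.mem_map] at ha
      obtain ⟨y, hy, rfl⟩ := ha
      have := hu y hy
      omega)
  rw [h1, add_zero, h2, Multiset.map_map]
  rw [Multiset.map_congr rfl (fun x hx => by
    simp only [Function.comp_apply]; have := hu x hx; omega :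
    ∀ x ∈ u, ((2 * ·) ∘ (· / 2)) x = x)]
  exact Multiset.map_id' _

lemma dbl'_card {j : ℕ} {u : Multiset ℕ} (hc : Multiset.card u ≤ j) :
    Multiset.card (dbl' j u) = j := by
  rw [dbl', Multiset.card_add, Multiset.card_map, Multiset.card_replicate]
  omega

lemma dbl'_sum {j : ℕ} {u : Multiset ℕ} (hu : ∀ x ∈ u, 0 < x ∧ 2 ∣ x) :
    2 * (dbl' j u).sum = u.sum := by
  rw [dbl', Multiset.sum_add, Multiset.sum_replicate, smul_zero, add_zero]
  induction u using Multiset.induction_on with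
  | empty => simp
  | cons a s ih =>
    simp only [Multiset.map_cons, Multiset.sum_cons, Multiset.mem_cons] at *
    have ha := hu a (Or.inl rfl)
    have := ih (fun x hx => hu x (Or.inr hx))
    omega

lemma dbl'_mem {j B : ℕ} {u : Multiset ℕ} (hu : ∀ x ∈ u, x ≤ 2 * B) :
    ∀ x ∈ dbl' j u, x ≤ B := by
  intro x hx
  rw [dbl', Multiset.mem_add] at hx
  rcases hx with hx | hx
  · rw [Multiset.mem_map] at hx
    obtain ⟨y, hy, rfl⟩ := hx
    have := hu y hy
    omega
  · rw [Multiset.eq_of_mem_replicate hx]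
    exact Nat.zero_le _

/-! ### finiteness -/

lemma finite_bounded (a b : ℕ) :
    Finite {s : Multiset ℕ // Multiset.card s ≤ a ∧ ∀ x ∈ s, x ≤ b} := by
  apply Finite.of_injective (β := Fin (b + 1) → Fin (a + 1))
    (f := fun s v => ⟨Multiset.count (v : ℕ) s.val, by
      have h1 : Multiset.count (v : ℕ) s.val ≤ Multiset.card s.val := Multiset.count_le_card _ _
      have := s.2.1
      omega⟩)
  intro s t h
  apply Subtype.ext
  ext v
  by_cases hv : v ≤ b
  · have := congrFun h ⟨v, by omega⟩
    exact congrArg Fin.val this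
  · rw [Multiset.count_eq_zero_of_notMem (fun hm => hv (s.2.2 v hm)),
      Multiset.count_eq_zero_of_notMem (fun hm => hv (t.2.2 v hm))]

end Stmt14Aux
namespace Stmt14Aux

/-- the `j`-th summand type -/
def Tset (N k n j : ℕ) : Type :=
  {p : Multiset ℕ × Multiset ℕ //
    (p.1.sum : ℤ) + (p.2.sum : ℤ) = (n : ℤ) - ((k - 2*j).choose 2 : ℕ) ∧
    Multiset.card p.1 ≤ j ∧ Multiset.card p.2 ≤ k - 2*j ∧
    (k : ℤ) - 2*j ≤ (N : ℤ) + 1 ∧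
    (∀ x ∈ p.1, 0 < x ∧ 2 ∣ x ∧ x ≤ N * 2) ∧
    (∀ x ∈ p.2, 0 < x ∧ (x : ℤ) ≤ (N : ℤ) + 1 - k + 2*j)}

/-- the intermediate decomposed type -/
def Bset (N k n : ℕ) : Type :=
  {q : Multiset ℕ × Multiset ℕ //
    q.2.Nodup ∧ 2 * Multiset.card q.1 + Multiset.card q.2 = k ∧
    2 * q.1.sum + q.2.sum = n ∧ (∀ x ∈ q.1, x ≤ N) ∧ (∀ x ∈ q.2, x ≤ N)}

instance TsetFinite (N k n j : ℕ) : Finite (Tset N k n j) := by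
  haveI := finite_bounded j (N * 2)
  haveI := finite_bounded k (N + 1 + 2*j)
  apply Finite.of_injective
    (β := {s : Multiset ℕ // Multiset.card s ≤ j ∧ ∀ x ∈ s, x ≤ N * 2}
        × {s : Multiset ℕ // Multiset.card s ≤ k ∧ ∀ x ∈ s, x ≤ N + 1 + 2*j})
    (f := fun p => (⟨p.1.1, p.2.2.1, fun x hx => (p.2.2.2.2.2.1 x hx).2.2⟩,
      ⟨p.1.2, le_trans p.2.2.2.1 (Nat.sub_le _ _), fun x hx => by
        have := (p.2.2.2.2.2.2 x hx).2
        omega⟩))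
  intro p q h
  apply Subtype.ext
  have h1 := congrArg (fun z => z.1.val) h
  have h2 := congrArg (fun z => z.2.val) h
  exact Prod.ext h1 h2

/-- Step 1: padding with zeros -/
def E1 (N k n : ℕ) :
    {s : Multiset ℕ // s.sum = n ∧ Multiset.card s ≤ k ∧ ∀ x ∈ s, 0 < x ∧ x ≤ N} ≃
    {s : Multiset ℕ // Multiset.card s = k ∧ s.sum = n ∧ ∀ x ∈ s, x ≤ N} where
  toFun s := ⟨s.val + Multiset.replicate (k - Multiset.card s.val) 0, by
    obtain ⟨hsum, hcard, hmem⟩ := s.2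
    refine ⟨?_, ?_, ?_⟩
    · rw [Multiset.card_add, Multiset.card_replicate]; omega
    · rw [Multiset.sum_add, Multiset.sum_replicate, smul_zero, add_zero, hsum]
    · intro x hx
      rcases Multiset.mem_add.1 hx with hx | hx
      · exact (hmem x hx).2
      · rw [Multiset.eq_of_mem_replicate hx]; exact Nat.zero_le _⟩
  invFun s := ⟨Multiset.filter (0 < ·) s.val, by
    obtain ⟨hcard, hsum, hmem⟩ := s.2
    refine ⟨by rw [sum_filter_pos, hsum], ?_, ?_⟩
    · calc Multiset.card (Multiset.filter (0 < ·) s.val)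
          ≤ Multiset.card s.val := Multiset.card_le_card (Multiset.filter_le _ _)
        _ = k := hcard
    · intro x hx
      rw [Multiset.mem_filter] at hx
      exact ⟨hx.2, hmem x hx.1⟩⟩
  left_inv s := by
    apply Subtype.ext
    obtain ⟨hsum, hcard, hmem⟩ := s.2
    simp only [Multiset.filter_add]
    rw [Multiset.filter_eq_self.2 (fun x hx => (hmem x hx).1),
      Multiset.filter_eq_nil.2 (fun a ha => by rw [Multiset.eq_of_mem_replicate ha]; omega),
      add_zero]
  right_inv s := by
    apply Subtype.ext
    show Multiset.filter (0 < ·) s.val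
      + Multiset.replicate (k - Multiset.card (Multiset.filter (0 < ·) s.val)) 0 = s.val
    obtain ⟨hcard, hsum, hmem⟩ := s.2
    have hsplit := Multiset.filter_add_not (0 < ·) s.val
    have hc2 := congrArg (fun z => Multiset.card z) hsplit
    simp only [Multiset.card_add] at hc2
    rw [filter_not_pos] at hsplit hc2
    simp only [Multiset.card_replicate] at hc2
    have : k - Multiset.card (Multiset.filter (0 < ·) s.val) = Multiset.count 0 s.val := by
      omega
    rw [this]
    conv_rhs => rw [← hsplit]

/-- Step 2: split into pairs and odd-multiplicity values -/
def E2 (N k n : ℕ) :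
    {s : Multiset ℕ // Multiset.card s = k ∧ s.sum = n ∧ ∀ x ∈ s, x ≤ N} ≃ Bset N k n where
  toFun s := ⟨(half s.val, odds s.val), by
    obtain ⟨hcard, hsum, hmem⟩ := s.2
    refine ⟨odds_nodup _, ?_, ?_, ?_, ?_⟩
    · rw [card_half_odds, hcard]
    · rw [sum_half_odds, hsum]
    · exact fun x hx => hmem x (mem_half _ _ hx)
    · exact fun x hx => hmem x (mem_odds _ _ hx)⟩
  invFun q := ⟨q.val.1 + q.val.1 + q.val.2, by
    obtain ⟨hnd, hcard, hsum, h1, h2⟩ := q.2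
    refine ⟨by simp only [Multiset.card_add]; omega,
      by simp only [Multiset.sum_add]; omega, ?_⟩
    intro x hx
    rcases Multiset.mem_add.1 hx with hx | hx
    · rcases Multiset.mem_add.1 hx with hx | hx
      · exact h1 x hx
      · exact h1 x hx
    · exact h2 x hx⟩
  left_inv s := Subtype.ext (half_add_odds s.val)
  right_inv q := by
    apply Subtype.ext
    obtain ⟨hnd, hcard, hsum, h1, h2⟩ := q.2
    exact Prod.ext (half_tt _ _ hnd) (odds_tt _ _ hnd)

/-- the fiber map -/
def fib (N k n : ℕ) (q : Bset N k n) : {j : ℕ // j ∈ Finset.range (k / 2 + 1)} :=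
  ⟨Multiset.card q.val.1, by
    have := q.2.2.1
    rw [Finset.mem_range]
    omega⟩

set_option maxHeartbeats 2000000 in
/-- Step 3 per-fiber equivalence -/
def E4 (N k n : ℕ) (j : {j : ℕ // j ∈ Finset.range (k / 2 + 1)}) :
    {q : Bset N k n // fib N k n q = j} ≃ Tset N k n (j : ℕ) where
  toFun q := ⟨(dbl q.val.val.1, stairG q.val.val.2), by
    obtain ⟨hnd, hcard, hsum, ht, hu⟩ := q.val.2
    have hjt : Multiset.card q.val.val.1 = (j : ℕ) := congrArg Subtype.val q.2
    have hmu : Multiset.card q.val.val.2 = k - 2 * (j : ℕ) := by omega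
    have hG := stairG_sum hnd
    have hGc := stairG_card_le (O := q.val.val.2)
    have hNu : Multiset.card q.val.val.2 ≤ N + 1 := by
      have hsub : q.val.val.2.toFinset ⊆ Finset.range (N + 1) := fun x hx => by
        rw [Finset.mem_range, Nat.lt_succ_iff]
        exact hu x (Multiset.mem_toFinset.1 hx)
      have := Finset.card_le_card hsub
      rw [Multiset.toFinset_card_of_nodup hnd, Finset.card_range] at this
      exact this
    refine ⟨?_, ?_, ?_, ?_, ?_, ?_⟩
    · have hd := dbl_sum q.val.val.1
      dsimp only
      rw [← hmu]
      omega
    · rw [← hjt]; exact dbl_card_le _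
    · rw [← hmu]; exact hGc
    · omega
    · intro x hx
      obtain ⟨y, hy, hy0, rfl⟩ := dbl_mem hx
      have := ht y hy
      exact ⟨by omega, ⟨y, rfl⟩, by omega⟩
    · intro x hx
      have := stairG_mem hnd hu x hx
      refine ⟨this.1, ?_⟩
      have h2 := this.2
      rw [hmu] at h2
      have hjk : (j : ℕ) ≤ k / 2 := by have := j.2; rw [Finset.mem_range] at this; omega
      omega⟩
  invFun p :=
    ⟨⟨(dbl' (j : ℕ) p.val.1, stairG' (k - 2 * (j : ℕ)) p.val.2), by
      have hjk : (j : ℕ) ≤ k / 2 := by have := j.2; rw [Finset.mem_range] at this; omega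
      obtain ⟨h1, h2, h3, h4, h5, h6⟩ := p.2
      refine ⟨stairG'_nodup, ?_, ?_, ?_, ?_⟩
      · rw [dbl'_card h2, stairG'_card h3]; omega
      · have hd := dbl'_sum (j := (j : ℕ)) (fun x hx => ⟨(h5 x hx).1, (h5 x hx).2.1⟩)
        have hg := stairG'_sum h3
        have : p.val.1.sum + p.val.2.sum + ((k - 2 * (j : ℕ)).choose 2) = n := by
          omega
        show 2 * (dbl' (j : ℕ) p.val.1).sum + (stairG' (k - 2 * (j : ℕ)) p.val.2).sum = n
        omega
      · exact dbl'_mem (fun x hx => by have := (h5 x hx).2.2; omega)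
      · refine stairG'_mem h3 (B := N) (by have := p.2.2.2.2.1; omega) ?_
        intro x hx
        have hx2 := (h6 x hx).2
        have hjk2 := h4
        omega⟩,
      Subtype.ext (dbl'_card p.2.2.1)⟩
  left_inv q := by
    apply Subtype.ext
    apply Subtype.ext
    obtain ⟨hnd, hcard, hsum, ht, hu⟩ := q.val.2
    have hjt : Multiset.card q.val.val.1 = (j : ℕ) := congrArg Subtype.val q.2
    have hmu : Multiset.card q.val.val.2 = k - 2 * (j : ℕ) := by omega
    refine Prod.ext ?_ ?_
    · show dbl' (j : ℕ) (dbl q.val.val.1) = q.val.val.1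
      rw [← hjt]
      exact dbl'_dbl _
    · show stairG' (k - 2 * (j : ℕ)) (stairG q.val.val.2) = q.val.val.2
      rw [← hmu]
      exact stairG'_stairG hnd
  right_inv p := by
    apply Subtype.ext
    obtain ⟨h1, h2, h3, h4, h5, h6⟩ := p.2
    refine Prod.ext ?_ ?_
    · show dbl (dbl' (j : ℕ) p.val.1) = p.val.1
      exact dbl_dbl' h2 (fun x hx => ⟨(h5 x hx).1, (h5 x hx).2.1⟩)
    · show stairG (stairG' (k - 2 * (j : ℕ)) p.val.2) = p.val.2
      exact stairG_stairG' h3 (fun x hx => (h6 x hx).1)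

end Stmt14Aux
namespace Stmt14Aux

lemma Tset_card (N k n j : ℕ) (hj : j ≤ k / 2) :
    Nat.card (Tset N k n j) =
      pbarZ 2 (N : ℤ) ((N : ℤ) + 1 - k + 2 * j) (j : ℤ) ((k : ℤ) - 2 * j)
        ((n : ℤ) - (k - 2 * j).choose 2) := by
  by_cases hN2 : (0 : ℤ) ≤ (N : ℤ) + 1 - k + 2 * j
  · by_cases hn : (0 : ℤ) ≤ (n : ℤ) - (k - 2 * j).choose 2
    · rw [pbarZ, if_pos ⟨Int.natCast_nonneg N, hN2, Int.natCast_nonneg j, by omega, hn⟩]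
      rw [pbar]
      apply Nat.card_congr
      apply Equiv.subtypeEquiv (Equiv.refl _)
      intro p
      simp only [Equiv.refl_apply]
      have e1 : ((N : ℤ)).toNat = N := by omega
      have e2 : ((j : ℤ)).toNat = j := by omega
      have e3 : (((k : ℤ)) - 2 * j).toNat = k - 2 * j := by omega
      have e4 : (((N : ℤ)) + 1 - k + 2 * j).toNat + k = N + 1 + 2 * j ∨
          ((((N : ℤ)) + 1 - k + 2 * j).toNat : ℤ) = (N : ℤ) + 1 - k + 2 * j := by
        right; omega
      have e4' : ((((N : ℤ)) + 1 - k + 2 * j).toNat : ℤ) = (N : ℤ) + 1 - k + 2 * j := by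
        omega
      have e5 : (((n : ℤ) - (k - 2 * j).choose 2).toNat : ℤ)
          = (n : ℤ) - (k - 2 * j).choose 2 := by omega
      constructor
      · rintro ⟨h1, h2, h3, h4, h5, h6⟩
        refine ⟨?_, by rw [e2]; exact h2, by rw [e3]; exact h3, ?_, ?_⟩
        · omega
        · exact fun x hx => ⟨(h5 x hx).1, (h5 x hx).2.1, by rw [e1]; exact (h5 x hx).2.2⟩
        · intro x hx
          refine ⟨(h6 x hx).1, ?_⟩
          have := (h6 x hx).2
          omega
      · rintro ⟨h1, h2, h3, h4, h5⟩
        refine ⟨by omega, by rwa [e2] at h2, by rwa [e3] at h3, by omega, ?_, ?_⟩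
        · exact fun x hx => ⟨(h4 x hx).1, (h4 x hx).2.1, by rw [← e1]; exact (h4 x hx).2.2⟩
        · intro x hx
          refine ⟨(h5 x hx).1, ?_⟩
          have := (h5 x hx).2
          omega
    · have he : IsEmpty (Tset N k n j) := ⟨fun p => by
        have h1 := p.2.1
        have := Int.natCast_nonneg p.val.1.sum
        have := Int.natCast_nonneg p.val.2.sum
        omega⟩
      rw [Nat.card_of_isEmpty, pbarZ, if_neg (by omega)]
  · have he : IsEmpty (Tset N k n j) := ⟨fun p => by
      have h4 := p.2.2.2.2.1
      omega⟩
    rw [Nat.card_of_isEmpty, pbarZ, if_neg (by omega)]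

end Stmt14Aux

open Stmt14Aux in
theorem stmt14 (N k n : ℕ) :
    pcount N k n =
      ∑ j ∈ Finset.range (k / 2 + 1),
        pbarZ 2 (N : ℤ) ((N : ℤ) + 1 - k + 2 * j) (j : ℤ) ((k : ℤ) - 2 * j)
          ((n : ℤ) - (k - 2 * j).choose 2) := by
  classical
  have hE : {s : Multiset ℕ // s.sum = n ∧ s.card ≤ k ∧ ∀ x ∈ s, 0 < x ∧ x ≤ N}
      ≃ Σ j : {j : ℕ // j ∈ Finset.range (k / 2 + 1)}, Tset N k n (j : ℕ) :=
    (E1 N k n).trans ((E2 N k n).trans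
      (((Equiv.sigmaFiberEquiv (fib N k n)).symm).trans
        (Equiv.sigmaCongrRight (fun j => E4 N k n j))))
  have h0 : pcount N k n
      = Nat.card (Σ j : {j : ℕ // j ∈ Finset.range (k / 2 + 1)}, Tset N k n (j : ℕ)) :=
    Nat.card_congr hE
  rw [h0]
  haveI : ∀ j : {j : ℕ // j ∈ Finset.range (k / 2 + 1)}, Fintype (Tset N k n (j : ℕ)) :=
    fun j => Fintype.ofFinite _
  rw [Nat.card_eq_fintype_card, Fintype.card_sigma]
  rw [← Finset.sum_coe_sort (Finset.range (k / 2 + 1)) (fun j =>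
    pbarZ 2 (N : ℤ) ((N : ℤ) + 1 - k + 2 * j) (j : ℤ) ((k : ℤ) - 2 * j)
      ((n : ℤ) - (k - 2 * j).choose 2))]
  apply Finset.sum_congr rfl
  intro j _
  rw [← Nat.card_eq_fintype_card]
  exact Tset_card N k n (j : ℕ) (by have := j.2; rw [Finset.mem_range] at this; omega)
end
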